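/- Assume f : ℝ → ℝ is continuous and satisfies (f₂). Let u be a solution of the IVP with initial value α defined on all of [0,∞), and suppose lim_{r→∞} u(r) = ℓ for some real number ℓ. Then lim_{r→∞} u'(r) = 0 and f(ℓ) = 0. -/

import Mathlib

open Set Filter MeasureTheory

noncomputable def phim (m x : ℝ) : ℝ := |x| ^ (m - 2) * x

noncomputable def Fint (f : ℝ → ℝ) (s : ℝ) : ℝ := ∫ t in (0:ℝ)..s, f t

noncomputable def Qfun (N m : ℝ) (f : ℝ → ℝ) (s : ℝ) : ℝ :=
  m * N * Fint f s - (N - m) * s * f s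

/-- `u` (with derivative function `u'`) is a solution of the radial quasilinear
equation on the set `J`. -/
def IsSolutionOn (N m : ℝ) (f : ℝ → ℝ) (J : Set ℝ) (u u' : ℝ → ℝ) : Prop :=
  (∀ r ∈ J, HasDerivWithinAt u (u' r) J r) ∧ ContinuousOn u' J ∧
    ∃ w' : ℝ → ℝ,
      (∀ r ∈ J ∩ Set.Ioi (0:ℝ),
        HasDerivWithinAt (fun t => phim m (u' t)) (w' r) (J ∩ Set.Ioi (0:ℝ)) r) ∧
      ContinuousOn w' (J ∩ Set.Ioi (0:ℝ)) ∧
      ∀ r ∈ J ∩ Set.Ioi (0:ℝ), w' r + ((N - 1) / r) * phim m (u' r) + f (u r) = 0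

def IsIVPSolutionOn (N m : ℝ) (f : ℝ → ℝ) (α : ℝ) (J : Set ℝ) (u u' : ℝ → ℝ) : Prop :=
  IsSolutionOn N m f J u u' ∧ u 0 = α ∧ u' 0 = 0

/-- Admissible domains for the IVP: `[0,∞)` or `[0,R)` with `0 < R`. -/
def IVPDomain (J : Set ℝ) : Prop :=
  J = Set.Ici (0:ℝ) ∨ ∃ R : ℝ, 0 < R ∧ J = Set.Ico (0:ℝ) R

/-- The solution `u` of the IVP on `J` cannot be extended to a solution on a
strictly larger admissible domain. -/
def Noncontinuable (N m : ℝ) (f : ℝ → ℝ) (α : ℝ) (J : Set ℝ) (u u' : ℝ → ℝ) : Prop :=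
  ∀ J' : Set ℝ, IVPDomain J' → J ⊂ J' →
    ¬ ∃ v v' : ℝ → ℝ, IsIVPSolutionOn N m f α J' v v' ∧ Set.EqOn v u J ∧ Set.EqOn v' u' J

open Classical in
/-- The filter describing the approach to the right endpoint of an IVP domain. -/
noncomputable def domEnd (J : Set ℝ) : Filter ℝ :=
  if J = Set.Ici (0:ℝ) then Filter.atTop else nhdsWithin (sSup J) (Set.Iio (sSup J))

def LocLipschitzOn (f : ℝ → ℝ) (S : Set ℝ) : Prop :=
  ∀ x ∈ S, ∃ ε : ℝ, 0 < ε ∧ ∃ K : NNReal, LipschitzOnWith K f (Metric.ball x ε ∩ S)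

/-- Assumption (f₂). -/
structure Hf2 (f : ℝ → ℝ) (βm βp : ℝ) (γm γp : EReal) : Prop where
  hβm : βm < 0
  hβp : 0 < βp
  hFneg : ∀ s : ℝ, s ∈ Set.Ioo βm βp → s ≠ 0 → Fint f s < 0
  hFβm : Fint f βm = 0
  hFβp : Fint f βp = 0
  hγp : (βp : EReal) < γp
  hγm : γm < (βm : EReal)
  hfpos : ∀ s : ℝ, βp < s → (s : EReal) < γp → 0 < f s
  hfneg : ∀ s : ℝ, γm < (s : EReal) → s < βm → f s < 0
  hγpzero : ∀ s : ℝ, (s : EReal) = γp → f s = 0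
  hγmzero : ∀ s : ℝ, (s : EReal) = γm → f s = 0
  hlim : ∃ L : EReal,
    Filter.Tendsto (fun s : ℝ => (Fint f s : EReal))
      (Filter.comap Real.toEReal (nhdsWithin γp (Set.Iio γp))) (nhds L) ∧
    Filter.Tendsto (fun s : ℝ => (Fint f s : EReal))
      (Filter.comap Real.toEReal (nhdsWithin γm (Set.Ioi γm))) (nhds L)
  hlip : LocLipschitzOn f {s : ℝ | (γm < (s : EReal) ∧ s < 0) ∨ (0 < s ∧ (s : EReal) < γp)}

/-- Assumption (f₃). -/
def Hf3 (N m : ℝ) (f : ℝ → ℝ) (βm βp : ℝ) (γm γp : EReal) : Prop :=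
  (γp = ⊤ →
    (∃ βb : ℝ, βp < βb ∧ ∀ s : ℝ, βb ≤ s → 0 ≤ Qfun N m f s) ∧
    (∃ θ : ℝ, θ ∈ Set.Ioo (0:ℝ) 1 ∧
      Filter.Tendsto (fun s : ℝ =>
        sInf ((fun p : ℝ × ℝ =>
          Qfun N m f p.2 * ((|s| ^ (m - 2) * s) / f p.1) ^ (N / m)) ''
            (Set.Icc (θ * s) s ×ˢ Set.Icc (θ * s) s)))
        Filter.atTop Filter.atTop)) ∧
  (γm = ⊥ →
    (∃ βb : ℝ, -βb < βm ∧ ∀ s : ℝ, s ≤ -βb → 0 ≤ Qfun N m f s) ∧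
    (∃ θ : ℝ, θ ∈ Set.Ioo (0:ℝ) 1 ∧
      Filter.Tendsto (fun s : ℝ =>
        sInf ((fun p : ℝ × ℝ =>
          Qfun N m f p.2 * ((|s| ^ (m - 2) * s) / f p.1) ^ (N / m)) ''
            (Set.Icc s (θ * s) ×ˢ Set.Icc s (θ * s))))
        Filter.atBot Filter.atTop))

/-- Assumption (f₄). -/
def Hf4 (N m : ℝ) (f : ℝ → ℝ) (βm βp : ℝ) (γm γp : EReal) : Prop :=
  (γp ≠ ⊤ → ∃ L₀ : ℝ, 0 < L₀ ∧ ∃ βb : ℝ, βp < βb ∧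
    ∀ s : ℝ, βb ≤ s → (s : EReal) < γp → f s ≤ L₀ * (γp.toReal - s) ^ (m - 1)) ∧
  (γm ≠ ⊥ → ∃ L₀ : ℝ, 0 < L₀ ∧ ∃ βb : ℝ, -βm < βb ∧
    ∀ s : ℝ, γm < (s : EReal) → s ≤ -βb → -f s ≤ L₀ * (s - γm.toReal) ^ (m - 1))

lemma phim_neg (m x : ℝ) : phim m (-x) = - phim m x := by
  simp [phim, mul_comm]

lemma phim_zero (m : ℝ) : phim m 0 = 0 := by simp [phim]

lemma phim_of_pos {m x : ℝ} (hx : 0 < x) : phim m x = x ^ (m - 1) := by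
  rw [phim, abs_of_pos hx, show m - 1 = m - 2 + 1 by ring, Real.rpow_add_one hx.ne']

lemma phim_nonpos {m x : ℝ} (hx : x ≤ 0) : phim m x ≤ 0 :=
  mul_nonpos_of_nonneg_of_nonpos (Real.rpow_nonneg (abs_nonneg x) _) hx

lemma le_of_le_phim {m c x : ℝ} (hm : 1 < m) (hc : 0 < c) (h : c ≤ phim m x) :
    c ^ (m - 1)⁻¹ ≤ x := by
  have hx : 0 < x := by
    by_contra hx
    exact absurd (lt_of_lt_of_le hc h) (not_lt.mpr (phim_nonpos (le_of_not_gt hx)))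
  rw [phim_of_pos hx] at h
  exact (Real.rpow_inv_le_iff_of_pos hc.le hx.le (by linarith)).mpr h

lemma le_neg_one_of_phim_le {m x : ℝ} (hm : 1 < m) (h : phim m x ≤ -1) : x ≤ -1 := by
  have h1 : (1:ℝ) ≤ phim m (-x) := by rw [phim_neg]; linarith
  have := le_of_le_phim hm one_pos h1
  rw [Real.one_rpow] at this
  linarith

lemma inter_Ici_Ioi : Set.Ici (0:ℝ) ∩ Set.Ioi 0 = Set.Ioi 0 :=
  Set.inter_eq_self_of_subset_right Set.Ioi_subset_Ici_self

lemma ftc_key {N m : ℝ} (hm : 1 < m) (hNm : m ≤ N) {f : ℝ → ℝ} (hf : Continuous f)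
    {u u' : ℝ → ℝ} (hu : IsSolutionOn N m f (Set.Ici 0) u u') :
    ContinuousOn u (Set.Ici 0) ∧
    (∀ a b : ℝ, 0 < a → a ≤ b → IntervalIntegrable u' volume a b) ∧
    (∀ a b : ℝ, 0 < a → a ≤ b → u b - u a = ∫ t in a..b, u' t) ∧
    (∀ a b : ℝ, 0 < a → a ≤ b →
      IntervalIntegrable (fun t => t ^ (N-1) * f (u t)) volume a b) ∧
    (∀ a b : ℝ, 0 < a → a ≤ b →
      b ^ (N-1) * phim m (u' b) - a ^ (N-1) * phim m (u' a)
        = - ∫ t in a..b, t ^ (N-1) * f (u t)) := by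
  obtain ⟨hud, huc, w', hwd, hwc, heq⟩ := hu
  rw [inter_Ici_Ioi] at hwd hwc heq
  have hcu : ContinuousOn u (Set.Ici 0) := fun r hr => (hud r hr).continuousWithinAt
  have hIcc : ∀ a b : ℝ, 0 < a → Set.Icc a b ⊆ Set.Ici (0:ℝ) := fun a b ha x hx =>
    le_trans ha.le hx.1
  have hint_u' : ∀ a b : ℝ, 0 < a → a ≤ b → IntervalIntegrable u' volume a b := by
    intro a b ha hab
    exact (huc.mono (by rw [Set.uIcc_of_le hab]; exact hIcc a b ha)).intervalIntegrable
  have hint_v : ∀ a b : ℝ, 0 < a → a ≤ b →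
      IntervalIntegrable (fun t => t ^ (N-1) * f (u t)) volume a b := by
    intro a b ha hab
    apply ContinuousOn.intervalIntegrable
    rw [Set.uIcc_of_le hab]
    apply ContinuousOn.mul
    · exact continuousOn_id.rpow_const fun x hx => Or.inl (lt_of_lt_of_le ha hx.1).ne'
    · exact hf.comp_continuousOn (hcu.mono (hIcc a b ha))
  refine ⟨hcu, hint_u', ?_, hint_v, ?_⟩
  · intro a b ha hab
    rw [intervalIntegral.integral_eq_sub_of_hasDerivAt (fun x hx => ?_) (hint_u' a b ha hab)]
    rw [Set.uIcc_of_le hab] at hx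
    have hx0 : 0 < x := lt_of_lt_of_le ha hx.1
    exact (hud x hx0.le).hasDerivAt (mem_of_superset (isOpen_Ioi.mem_nhds hx0)
      Set.Ioi_subset_Ici_self)
  · intro a b ha hab
    have hd : ∀ x ∈ Set.uIcc a b,
        HasDerivAt (fun t => t ^ (N-1) * phim m (u' t)) (-(x ^ (N-1) * f (u x))) x := by
      intro x hx
      rw [Set.uIcc_of_le hab] at hx
      have hx0 : 0 < x := lt_of_lt_of_le ha hx.1
      have h1 : HasDerivAt (fun t : ℝ => t ^ (N-1)) ((N-1) * x ^ (N-1-1)) x :=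
        Real.hasDerivAt_rpow_const (Or.inl hx0.ne')
      have h2 : HasDerivAt (fun t => phim m (u' t)) (w' x) x :=
        (hwd x hx0).hasDerivAt (isOpen_Ioi.mem_nhds hx0)
      have h3 := h1.mul h2
      refine h3.congr_deriv (Eq.symm ?_)
      have hx2 : x ^ (N-1-1) = x ^ (N-1) * x⁻¹ := by
        rw [Real.rpow_sub hx0, Real.rpow_one, div_eq_mul_inv]
      rw [hx2]
      have he := heq x hx0
      rw [div_eq_mul_inv] at he
      linear_combination (-(x ^ (N-1))) * he
    have h4 := intervalIntegral.integral_eq_sub_of_hasDerivAt hd ((hint_v a b ha hab).neg)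
    rw [intervalIntegral.integral_neg] at h4
    linarith

lemma neg_sol {N m : ℝ} {f : ℝ → ℝ} {u u' : ℝ → ℝ}
    (hu : IsSolutionOn N m f (Set.Ici 0) u u') :
    IsSolutionOn N m (fun s => -f (-s)) (Set.Ici 0) (fun r => -u r) (fun r => -u' r) := by
  obtain ⟨hud, huc, w', hwd, hwc, heq⟩ := hu
  refine ⟨fun r hr => (hud r hr).neg, huc.neg, fun r => -(w' r), fun r hr => ?_, hwc.neg,
    fun r hr => ?_⟩
  · have := (hwd r hr).neg
    refine (congrArg (fun g => HasDerivWithinAt g (-(w' r)) (Set.Ici (0:ℝ) ∩ Set.Ioi 0) r) ?_).mpr this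
    funext t
    simp [phim_neg]
  · have := heq r hr
    simp only [phim_neg, neg_neg]
    linarith

lemma noPos {N m : ℝ} (hm : 1 < m) (hNm : m ≤ N) {f : ℝ → ℝ} (hf : Continuous f)
    {u u' : ℝ → ℝ} (hu : IsSolutionOn N m f (Set.Ici 0) u u')
    {l : ℝ} (hl : Tendsto u atTop (nhds l)) (hfl : 0 < f l) : False := by
  obtain ⟨hcu, hint_u', ftcu, hint_v, ftcv⟩ := ftc_key hm hNm hf hu
  have hN1 : (0:ℝ) ≤ N - 1 := by linarith
  set c := f l with hc
  have hfut : Tendsto (fun r => f (u r)) atTop (nhds c) := (hf.tendsto l).comp hl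
  have h1 : ∀ᶠ r in atTop, c/2 ≤ f (u r) :=
    hfut.eventually (eventually_ge_nhds (by linarith))
  have h2 : ∀ᶠ r in atTop, |u r - l| < 1 := by
    have := Metric.tendsto_atTop.mp hl 1 one_pos
    obtain ⟨R, hR⟩ := this
    exact eventually_atTop.mpr ⟨R, fun r hr => by simpa [Real.dist_eq] using hR r hr⟩
  obtain ⟨R, hR⟩ := eventually_atTop.mp ((h1.and h2).and (eventually_ge_atTop 1))
  -- key estimate
  set v : ℝ → ℝ := fun r => r ^ (N-1) * phim m (u' r) with hv
  have key : ∀ a b : ℝ, R ≤ a → a ≤ b → v b ≤ v a - (c/2) * a ^ (N-1) * (b - a) := by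
    intro a b haR hab
    have ha : 0 < a := lt_of_lt_of_le one_pos (hR a haR).2
    have hineq : ∫ t in a..b, (c/2) * a ^ (N-1) ≤ ∫ t in a..b, t ^ (N-1) * f (u t) := by
      apply intervalIntegral.integral_mono_on hab intervalIntegrable_const
        (hint_v a b ha hab)
      intro x hx
      have hxR : R ≤ x := le_trans haR hx.1
      have hfx := (hR x hxR).1.1
      have hxpow : a ^ (N-1) ≤ x ^ (N-1) := Real.rpow_le_rpow ha.le hx.1 hN1
      have hpos : (0:ℝ) < a ^ (N-1) := Real.rpow_pos_of_pos ha _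
      nlinarith [Real.rpow_pos_of_pos (lt_of_lt_of_le ha hx.1) (N-1)]
    rw [intervalIntegral.integral_const, smul_eq_mul] at hineq
    have := ftcv a b ha hab
    have hvv : v b - v a = - ∫ t in a..b, t ^ (N-1) * f (u t) := this
    nlinarith
  -- choose the point where v becomes very negative
  set a₀ := R with ha₀
  have ha₀1 : (1:ℝ) ≤ a₀ := (hR R le_rfl).2
  have ha₀pos : (0:ℝ) < a₀ := lt_of_lt_of_le one_pos ha₀1
  set r₀ : ℝ := max a₀ ((2/c) * ((2:ℝ) ^ (N-1) + |v a₀| + 1)) with hr₀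
  have hr₀a : a₀ ≤ r₀ := le_max_left _ _
  have hR₁ : ∀ s : ℝ, 2 * r₀ ≤ s → u' s ≤ -1 := by
    intro s hs
    set r := s / 2 with hrdef
    have hrr : r₀ ≤ r := by rw [hrdef]; linarith
    have hra : a₀ ≤ r := le_trans hr₀a hrr
    have hr1 : (1:ℝ) ≤ r := le_trans ha₀1 hra
    have hrpos : (0:ℝ) < r := lt_of_lt_of_le one_pos hr1
    have hs2 : s = 2 * r := by rw [hrdef]; ring
    have k1 : v r ≤ v a₀ - (c/2) * a₀ ^ (N-1) * (r - a₀) := key a₀ r le_rfl hra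
    have k2 : v s ≤ v r - (c/2) * r ^ (N-1) * (s - r) := key r s hra (by linarith)
    have hva : v r ≤ v a₀ := by
      have : (0:ℝ) ≤ (c/2) * a₀ ^ (N-1) * (r - a₀) := by
        have h7 := Real.rpow_pos_of_pos ha₀pos (N-1)
        have hc2 : (0:ℝ) < c/2 := by linarith
        exact mul_nonneg (mul_nonneg hc2.le h7.le) (by linarith)
      linarith
    -- s - r = r
    have hsr : s - r = r := by rw [hs2]; ring
    rw [hsr] at k2
    -- goal: v s ≤ -(s ^ (N-1))
    have hspow : s ^ (N-1) = 2 ^ (N-1) * r ^ (N-1) := by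
      rw [hs2, Real.mul_rpow (by norm_num) hrpos.le]
    have hrpow1 : (1:ℝ) ≤ r ^ (N-1) := Real.one_le_rpow hr1 hN1
    have hcr : (2/c) * ((2:ℝ) ^ (N-1) + |v a₀| + 1) ≤ r := le_trans (le_max_right _ _) hrr
    have hcpos : (0:ℝ) < c := hfl
    have hstep : (2:ℝ) ^ (N-1) + |v a₀| + 1 ≤ (c/2) * r := by
      rw [div_mul_eq_mul_div] at hcr
      have h := (div_le_iff₀ hcpos).mp hcr
      linarith
    have hvs : v s ≤ - s ^ (N-1) := by
      rw [hspow]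
      have habs : v a₀ ≤ |v a₀| := le_abs_self _
      have hp : (0:ℝ) ≤ r ^ (N-1) := (Real.rpow_pos_of_pos hrpos _).le
      have hint1 := mul_le_mul_of_nonneg_right hstep hp
      have hint2 := mul_le_mul_of_nonneg_left hrpow1 (by positivity : (0:ℝ) ≤ |v a₀| + 1)
      nlinarith
    have hphim : phim m (u' s) ≤ -1 := by
      have hspos : (0:ℝ) < s ^ (N-1) :=
        Real.rpow_pos_of_pos (by linarith) (N-1)
      have : s ^ (N-1) * phim m (u' s) ≤ s ^ (N-1) * (-1) := by
        rw [mul_neg_one]; exact le_trans hvs (by linarith)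
      exact (mul_le_mul_iff_right₀ hspos).mp this
    exact le_neg_one_of_phim_le hm hphim
  -- integrate u' ≤ -1 to contradict boundedness
  set R₁ := 2 * r₀ with hR₁def
  have hR₁pos : (0:ℝ) < R₁ := by
    have : (1:ℝ) ≤ r₀ := le_trans ha₀1 hr₀a
    linarith
  have hR₁R : R ≤ R₁ := by
    have : a₀ ≤ r₀ := hr₀a
    have : (1:ℝ) ≤ r₀ := le_trans ha₀1 hr₀a
    rw [hR₁def, ha₀] at *
    linarith [hr₀a]
  set b := R₁ + (u R₁ - l + 2) with hb
  have huR₁ : |u R₁ - l| < 1 := (hR R₁ hR₁R).1.2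
  have hbR₁ : R₁ ≤ b := by
    rw [hb]
    have := abs_lt.mp huR₁
    linarith [this.1]
  have hub : |u b - l| < 1 := (hR b (le_trans hR₁R hbR₁)).1.2
  have hftc := ftcu R₁ b hR₁pos hbR₁
  have hbound : ∫ t in R₁..b, u' t ≤ ∫ t in R₁..b, (-1:ℝ) := by
    apply intervalIntegral.integral_mono_on hbR₁ (hint_u' R₁ b hR₁pos hbR₁)
      intervalIntegrable_const
    intro x hx
    exact hR₁ x (le_trans le_rfl hx.1)
  rw [intervalIntegral.integral_const, smul_eq_mul] at hbound
  have h5 := abs_lt.mp huR₁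
  have h6 := abs_lt.mp hub
  rw [hb] at h6
  -- u b - u R₁ ≤ -(b - R₁) = -(u R₁ - l + 2)
  nlinarith [hftc, hbound]

lemma abs_phim {m : ℝ} (hm : 1 < m) (x : ℝ) : |phim m x| = |x| ^ (m-1) := by
  rcases eq_or_ne x 0 with h | h
  · rw [h, phim_zero]
    simp [Real.zero_rpow (by linarith : m - 1 ≠ 0)]
  · rw [phim, abs_mul, abs_of_nonneg (Real.rpow_nonneg (abs_nonneg x) _),
      show m - 1 = m - 2 + 1 by ring, Real.rpow_add_one (abs_ne_zero.mpr h)]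

lemma derivZero {N m : ℝ} (hm : 1 < m) (hNm : m ≤ N) {f : ℝ → ℝ} (hf : Continuous f)
    {u u' : ℝ → ℝ} (hu : IsSolutionOn N m f (Set.Ici 0) u u')
    {l : ℝ} (hl : Tendsto u atTop (nhds l)) (hfl : f l = 0) :
    Tendsto u' atTop (nhds 0) := by
  obtain ⟨hcu, hint_u', ftcu, hint_v, ftcv⟩ := ftc_key hm hNm hf hu
  have hN1 : (0:ℝ) ≤ N - 1 := by linarith
  have hm1 : (0:ℝ) < m - 1 := by linarith
  by_contra hcon
  rw [Metric.tendsto_atTop] at hcon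
  push_neg at hcon
  obtain ⟨ε, hε, hfreq⟩ := hcon
  simp only [Real.dist_eq, sub_zero] at hfreq
  set δ : ℝ := ε ^ (m-1) with hδdef
  have hδ : 0 < δ := Real.rpow_pos_of_pos hε _
  set A : ℝ := (2:ℝ) ^ (N-1) with hAdef
  have hA : 0 < A := Real.rpow_pos_of_pos two_pos _
  set c₀ : ℝ := δ / (2*A) with hc₀def
  have hc₀ : 0 < c₀ := by positivity
  have hAc₀ : A * c₀ = δ / 2 := by rw [hc₀def, mul_div_assoc', div_eq_div_iff (by positivity) two_ne_zero]; ring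
  set ε' : ℝ := c₀ ^ (m-1)⁻¹ with hε'def
  have hε' : 0 < ε' := Real.rpow_pos_of_pos hc₀ _
  have hfu0 : Tendsto (fun r => f (u r)) atTop (nhds 0) := by
    have := (hf.tendsto l).comp hl
    rwa [hfl] at this
  have h1 : ∀ᶠ r in atTop, |f (u r)| ≤ c₀ := by
    obtain ⟨R, hR⟩ := Metric.tendsto_atTop.mp hfu0 c₀ hc₀
    exact eventually_atTop.mpr ⟨R, fun r hr => by
      have := hR r hr; rw [Real.dist_eq, sub_zero] at this; linarith⟩
  have h2 : ∀ᶠ r in atTop, |u r - l| < ε'/4 := by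
    obtain ⟨R, hR⟩ := Metric.tendsto_atTop.mp hl (ε'/4) (by positivity)
    exact eventually_atTop.mpr ⟨R, fun r hr => by
      have := hR r hr; rwa [Real.dist_eq] at this⟩
  obtain ⟨R₀, hR₀⟩ := eventually_atTop.mp ((h1.and h2).and (eventually_ge_atTop 1))
  obtain ⟨s, hsR₀, hεs⟩ := hfreq R₀
  have hs1 : (1:ℝ) ≤ s := (hR₀ s hsR₀).2
  have hspos : (0:ℝ) < s := lt_of_lt_of_le one_pos hs1
  set v : ℝ → ℝ := fun r => r ^ (N-1) * phim m (u' r) with hv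
  set W := phim m (u' s) with hW
  have hWabs : δ ≤ |W| := by
    rw [hW, abs_phim hm]
    exact Real.rpow_le_rpow hε.le hεs hm1.le
  obtain ⟨σ, hσ, hσW⟩ : ∃ σ : ℝ, (σ = 1 ∨ σ = -1) ∧ σ * W = |W| := by
    rcases le_or_gt 0 W with h | h
    · exact ⟨1, Or.inl rfl, by rw [one_mul, abs_of_nonneg h]⟩
    · exact ⟨-1, Or.inr rfl, by rw [abs_of_neg h]; ring⟩
  have hσabs : |σ| = 1 := by rcases hσ with h | h <;> simp [h]
  have hspow : (0:ℝ) < s ^ (N-1) := Real.rpow_pos_of_pos hspos _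
  have claim : ∀ r ∈ Set.Icc s (s+1), ε' ≤ σ * u' r := by
    intro r hr
    have hrs : s ≤ r := hr.1
    have hrs1 : r ≤ s + 1 := hr.2
    have hrpos : 0 < r := lt_of_lt_of_le hspos hrs
    have hrpow : r ^ (N-1) ≤ A * s ^ (N-1) := by
      rw [hAdef, ← Real.mul_rpow (by norm_num) hspos.le]
      exact Real.rpow_le_rpow hrpos.le (by linarith) hN1
    have hrpowpos : (0:ℝ) < r ^ (N-1) := Real.rpow_pos_of_pos hrpos _
    -- bound |v r - v s|
    have hE := ftcv s r hspos hrs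
    have hnorm : |v r - v s| ≤ (δ/2) * s ^ (N-1) := by
      rw [hE, abs_neg]
      have hb : ∀ x ∈ Set.uIoc s r, ‖x ^ (N-1) * f (u x)‖ ≤ (A * s ^ (N-1)) * c₀ := by
        intro x hx
        rw [Set.uIoc_of_le hrs] at hx
        have hxs : s ≤ x := hx.1.le
        have hxr : x ≤ r := hx.2
        have hxpos : 0 < x := lt_of_lt_of_le hspos hxs
        have hfx : |f (u x)| ≤ c₀ := (hR₀ x (le_trans hsR₀ hxs)).1.1
        have hxpow : x ^ (N-1) ≤ A * s ^ (N-1) := le_trans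
          (Real.rpow_le_rpow hxpos.le hxr hN1) hrpow
        rw [Real.norm_eq_abs, abs_mul, abs_of_nonneg (Real.rpow_nonneg hxpos.le _)]
        exact mul_le_mul hxpow hfx (abs_nonneg _) (by positivity)
      have := intervalIntegral.norm_integral_le_of_norm_le_const hb
      rw [Real.norm_eq_abs] at this
      have hr1 : |r - s| ≤ 1 := by rw [abs_of_nonneg (by linarith)]; linarith
      calc |∫ t in s..r, t ^ (N-1) * f (u t)| ≤ (A * s ^ (N-1)) * c₀ * |r - s| := this
        _ ≤ (A * s ^ (N-1)) * c₀ * 1 := by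
            apply mul_le_mul_of_nonneg_left hr1 (by positivity)
        _ = (δ/2) * s ^ (N-1) := by rw [mul_one]; nlinarith [hAc₀]
    -- lower bound for σ * v r
    have hσvs : δ * s ^ (N-1) ≤ σ * v s := by
      have : σ * v s = s ^ (N-1) * (σ * W) := by rw [hv]; ring
      rw [this, hσW]
      linarith [mul_le_mul_of_nonneg_left hWabs hspow.le]
    have hσvr : (δ/2) * s ^ (N-1) ≤ σ * v r := by
      have h3 : -|v r - v s| ≤ σ * (v r - v s) := by
        have := neg_abs_le (σ * (v r - v s))
        rwa [abs_mul, hσabs, one_mul] at this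
      have h4 : σ * v r = σ * v s + σ * (v r - v s) := by ring
      linarith
    -- conclude σ * phim m (u' r) ≥ c₀
    have hc₀r : c₀ * r ^ (N-1) ≤ σ * v r := by
      have : c₀ * r ^ (N-1) ≤ c₀ * (A * s ^ (N-1)) :=
        mul_le_mul_of_nonneg_left hrpow hc₀.le
      have h5 : c₀ * (A * s ^ (N-1)) = (δ/2) * s ^ (N-1) := by rw [← hAc₀]; ring
      linarith
    have hσP : c₀ ≤ σ * phim m (u' r) := by
      have hvr : σ * v r = r ^ (N-1) * (σ * phim m (u' r)) := by rw [hv]; ring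
      rw [hvr] at hc₀r
      exact (mul_le_mul_iff_right₀ hrpowpos).mp (by linarith)
    have hphimσ : phim m (σ * u' r) = σ * phim m (u' r) := by
      rcases hσ with h | h <;> rw [h]
      · rw [one_mul, one_mul]
      · rw [show -1 * u' r = -(u' r) by ring, phim_neg]; ring
    have := le_of_le_phim hm hc₀ (by rw [hphimσ]; exact hσP)
    rwa [← hε'def] at this
  -- integrate the claim over [s, s+1]
  clear_value δ A c₀ ε' v W
  have hs1pos : s ≤ s + 1 := by linarith
  have hintσ : IntervalIntegrable (fun r => σ * u' r) volume s (s+1) :=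
    (hint_u' s (s+1) hspos hs1pos).const_mul σ
  have hmono : ∫ r in s..(s+1), ε' ≤ ∫ r in s..(s+1), σ * u' r :=
    intervalIntegral.integral_mono_on hs1pos intervalIntegrable_const hintσ claim
  rw [intervalIntegral.integral_const, intervalIntegral.integral_const_mul, smul_eq_mul,
    ← ftcu s (s+1) hspos hs1pos] at hmono
  -- contradiction with Cauchy property
  have hu1 : |u s - l| < ε'/4 := (hR₀ s hsR₀).1.2
  have hu2 : |u (s+1) - l| < ε'/4 := (hR₀ (s+1) (by linarith)).1.2
  have habs : σ * (u (s+1) - u s) ≤ |u (s+1) - u s| := by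
    have := le_abs_self (σ * (u (s+1) - u s))
    rwa [abs_mul, hσabs, one_mul] at this
  have h4 := abs_lt.mp hu1
  have h5 := abs_lt.mp hu2
  have h6 : |u (s+1) - u s| < ε'/2 := by
    rw [abs_lt]; constructor <;> linarith
  linarith

/-- if a global solution of the IVP converges, then its derivative
tends to `0` and the limit is a zero of `f`. -/
theorem ivp_solution_limit
    (N m : ℝ) (hm : 1 < m) (hNm : m ≤ N) (f : ℝ → ℝ) (hf : Continuous f)
    (βm βp : ℝ) (γm γp : EReal) (hf2 : Hf2 f βm βp γm γp)
    (α : ℝ) (u u' : ℝ → ℝ)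
    (hu : IsIVPSolutionOn N m f α (Set.Ici (0:ℝ)) u u')
    (l : ℝ) (hl : Filter.Tendsto u Filter.atTop (nhds l)) :
    Filter.Tendsto u' Filter.atTop (nhds 0) ∧ f l = 0 := by
  obtain ⟨hsol, hu0, hu'0⟩ := hu
  have hfl : f l = 0 := by
    rcases lt_trichotomy (f l) 0 with h | h | h
    · exact ((noPos hm hNm ((hf.comp continuous_neg).neg) (neg_sol hsol) hl.neg
        (by simpa using h)).elim)
    · exact h
    · exact (noPos hm hNm hf hsol hl h).elim
  exact ⟨derivZero hm hNm hf hsol hl hfl, hfl⟩
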